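/- Let λ>0, μ>0, let z:[0,∞)→ℂ be measurable with ‖z‖_λ < ∞, and let Θ be an asymptotic characteristic for z satisfying ‖Θ(t,ϑ,ω) − ϑ − ωt‖_λ ≤ (μ/λ)‖z‖_λ. Let f_∞ be a probability density on the cylinder with M := sup_{k∈ℤ,η∈ℝ} |f̂_∞(k,η)| e^{λ(|k|+|η|)} < ∞. Then the function w(t) := ∫_{[0,2π)×ℝ} e^{iΘ(t,ϑ,ω)} f_∞(ϑ,ω) dϑ dω satisfies ‖w‖_λ ≤ (μ/λ)‖z‖_λ + M. -/

import Mathlib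

open MeasureTheory

noncomputable section

/-- Weighted sup-norm `sup_{t ≥ 0} |z t| e^{l t}` for `z : ℝ → ℂ`. -/
def expNormZ (l : ℝ) (z : ℝ → ℂ) : ℝ :=
  ⨆ t : {t : ℝ // 0 ≤ t}, ‖z t.1‖ * Real.exp (l * t.1)

/-- Finiteness of the weighted sup-norm for `z : ℝ → ℂ`. -/
def ExpBddZ (l : ℝ) (z : ℝ → ℂ) : Prop :=
  BddAbove (Set.range fun t : {t : ℝ // 0 ≤ t} => ‖z t.1‖ * Real.exp (l * t.1))

/-- Weighted sup-norm `sup_{t ≥ 0, ϑ, ω} |h t ϑ ω| e^{l t}`. -/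
def expNormH (l : ℝ) (h : ℝ → ℝ → ℝ → ℂ) : ℝ :=
  ⨆ p : {t : ℝ // 0 ≤ t} × ℝ × ℝ, ‖h p.1.1 p.2.1 p.2.2‖ * Real.exp (l * p.1.1)

/-- Finiteness of the weighted sup-norm for `h`. -/
def ExpBddH (l : ℝ) (h : ℝ → ℝ → ℝ → ℂ) : Prop :=
  BddAbove (Set.range fun p : {t : ℝ // 0 ≤ t} × ℝ × ℝ =>
    ‖h p.1.1 p.2.1 p.2.2‖ * Real.exp (l * p.1.1))

/-- `Θ` is an asymptotic characteristic for the order parameter `z`, with coupling `μ`: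
`Θ(t,ϑ,ω) = ϑ + ωt + μ ∫_t^∞ Im(e^{iΘ(s,ϑ,ω)} conj(z s)) ds` for all `t ≥ 0`. -/
def IsAsymChar (μ : ℝ) (z : ℝ → ℂ) (Θ : ℝ → ℝ → ℝ → ℝ) : Prop :=
  ∀ t : ℝ, 0 ≤ t → ∀ ϑ ω : ℝ,
    Θ t ϑ ω = ϑ + ω * t + μ * ∫ s in Set.Ioi t,
      (Complex.exp (Complex.I * (Θ s ϑ ω : ℂ)) * (starRingEnd ℂ) (z s)).im

/-- The reference measure on the cylinder `[0, 2π) × ℝ`. -/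
def cylMeasure : Measure (ℝ × ℝ) :=
  (volume.restrict (Set.Ico 0 (2 * Real.pi))).prod volume

/-- `f` is a probability density on the cylinder: nonnegative, `2π`-periodic in the
first variable, with total integral one over `[0, 2π) × ℝ`. -/
structure IsCylDensity (f : ℝ → ℝ → ℝ) : Prop where
  nonneg : ∀ ϑ ω : ℝ, 0 ≤ f ϑ ω
  periodic : ∀ ϑ ω : ℝ, f (ϑ + 2 * Real.pi) ω = f ϑ ω
  integrable : Integrable (fun p : ℝ × ℝ => f p.1 p.2) cylMeasure
  integral_one : (∫ p : ℝ × ℝ, f p.1 p.2 ∂cylMeasure) = 1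

/-- The Fourier transform `f̂(k,η) = ∫_{[0,2π)×ℝ} f(ϑ,ω) e^{-i(kϑ+ηω)} dϑ dω`. -/
def fHat (f : ℝ → ℝ → ℝ) (k : ℤ) (η : ℝ) : ℂ :=
  ∫ p : ℝ × ℝ, (f p.1 p.2 : ℂ) *
    Complex.exp (-Complex.I * (((k : ℝ) * p.1 + η * p.2 : ℝ) : ℂ)) ∂cylMeasure

/-- The order parameter `w(t) = ∫_{[0,2π)×ℝ} e^{iΘ(t,ϑ,ω)} f(ϑ,ω) dϑ dω`. -/
def orderParam (f : ℝ → ℝ → ℝ) (Θ : ℝ → ℝ → ℝ → ℝ) (t : ℝ) : ℂ :=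
  ∫ p : ℝ × ℝ, Complex.exp (Complex.I * (Θ t p.1 p.2 : ℂ)) * (f p.1 p.2 : ℂ) ∂cylMeasure


section AuxLemmas

open Set Filter

private lemma integral_exp_neg_mul_Ioi' {l : ℝ} (hl : 0 < l) (t : ℝ) :
    ∫ s in Set.Ioi t, Real.exp (-(l * s)) = Real.exp (-(l * t)) / l := by
  have hderiv : ∀ s ∈ Set.Ici t, HasDerivAt (fun u => -Real.exp (-(l * u)) / l)
      (Real.exp (-(l * s))) s := by
    intro s _
    have h1 : HasDerivAt (fun u : ℝ => -(l * u)) (-l) s := by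
      simpa using (hasDerivAt_id s).const_mul (-l)
    have h2 : HasDerivAt (fun u : ℝ => Real.exp (-(l * u)))
        (Real.exp (-(l * s)) * (-l)) s := (Real.hasDerivAt_exp _).comp s h1
    have h3 := h2.neg.div_const l
    have h4 : -(Real.exp (-(l * s)) * -l) / l = Real.exp (-(l * s)) := by
      rw [mul_neg, neg_neg, mul_div_assoc, div_self (ne_of_gt hl), mul_one]
    rw [h4] at h3
    exact h3
  have hint : IntegrableOn (fun s => Real.exp (-(l * s))) (Set.Ioi t) := by
    simpa [neg_mul] using exp_neg_integrableOn_Ioi t hl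
  have htend : Tendsto (fun u => -Real.exp (-(l * u)) / l) atTop (nhds 0) := by
    have h1 : Tendsto (fun u : ℝ => l * u) atTop atTop :=
      Tendsto.const_mul_atTop hl tendsto_id
    have h2 : Tendsto (fun u : ℝ => Real.exp (-(l * u))) atTop (nhds 0) :=
      Real.tendsto_exp_neg_atTop_nhds_zero.comp h1
    simpa using h2.neg.div_const l
  rw [integral_Ioi_of_hasDerivAt_of_tendsto' hderiv hint htend]
  ring

private lemma abs_cexp_I_mul_sub_one_le' (x : ℝ) :
    ‖Complex.exp (Complex.I * x) - 1‖ ≤ |x| := by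
  have hsq : ‖Complex.exp (Complex.I * x) - 1‖ ^ 2 = 2 - 2 * Real.cos x := by
    rw [Complex.sq_norm, mul_comm, Complex.exp_mul_I]
    simp [Complex.normSq_apply, Complex.add_re, Complex.add_im, Complex.sub_re, Complex.sub_im,
      Complex.mul_re, Complex.mul_im, Complex.cos_ofReal_re, Complex.sin_ofReal_re]
    nlinarith [Real.sin_sq_add_cos_sq x]
  have hcos : 2 - 2 * Real.cos x ≤ x ^ 2 := by
    have h1 := Real.sin_sq_le_sq (x := x / 2)
    have h2 := Real.cos_sq (x / 2)
    rw [show 2 * (x / 2) = x by ring] at h2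
    have h3 := Real.sin_sq_add_cos_sq (x / 2)
    nlinarith
  have h0 := norm_nonneg (Complex.exp (Complex.I * x) - 1)
  nlinarith [abs_nonneg x, sq_abs x]

private lemma abs_cexp_I_sub' (a b : ℝ) :
    ‖Complex.exp (Complex.I * a) - Complex.exp (Complex.I * b)‖ ≤ |a - b| := by
  have heq : Complex.exp (Complex.I * a) - Complex.exp (Complex.I * b)
      = Complex.exp (Complex.I * b) * (Complex.exp (Complex.I * ((a - b : ℝ) : ℂ)) - 1) := by
    rw [mul_sub, mul_one, ← Complex.exp_add]
    push_cast
    ring_nf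
  rw [heq, norm_mul, Complex.norm_exp]
  simpa using abs_cexp_I_mul_sub_one_le' (a - b)

end AuxLemmas

/-- Bound on the new order parameter (Lemma 2 of the paper): `‖w‖_λ ≤ (μ/λ)‖z‖_λ + M`. -/
theorem orderParam_bound_exp
    (l μ : ℝ) (hl : 0 < l) (hμ : 0 < μ) (z : ℝ → ℂ) (hz : Measurable z)
    (hzb : ExpBddZ l z) (Θ : ℝ → ℝ → ℝ → ℝ) (hΘ : IsAsymChar μ z Θ)
    (hΘb : expNormH l (fun t ϑ ω => ((Θ t ϑ ω - ϑ - ω * t : ℝ) : ℂ)) ≤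
      μ / l * expNormZ l z)
    (f : ℝ → ℝ → ℝ) (hf : IsCylDensity f)
    (M : ℝ) (hM : ∀ (k : ℤ) (η : ℝ),
      ‖fHat f k η‖ * Real.exp (l * (|(k : ℝ)| + |η|)) ≤ M) :
    expNormZ l (orderParam f Θ) ≤ μ / l * expNormZ l z + M := by
  haveI : Nonempty {t : ℝ // 0 ≤ t} := ⟨⟨0, le_refl 0⟩⟩
  set N := expNormZ l z with hN
  have hNnn : 0 ≤ N := by
    have := le_ciSup hzb ⟨0, le_refl 0⟩
    have h0 : (0:ℝ) ≤ ‖z 0‖ * Real.exp (l * 0) := by positivity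
    exact le_trans h0 this
  have hMnn : 0 ≤ M := by
    have := hM 0 0
    have h0 : (0:ℝ) ≤ ‖fHat f 0 0‖ * Real.exp (l * (|((0:ℤ):ℝ)| + |(0:ℝ)|)) := by
      positivity
    exact le_trans h0 this
  have hzle : ∀ s : ℝ, 0 ≤ s → ‖z s‖ ≤ N * Real.exp (-(l * s)) := by
    intro s hs
    have h1 : ‖z s‖ * Real.exp (l * s) ≤ N := le_ciSup hzb ⟨s, hs⟩
    have h2 : (0:ℝ) < Real.exp (l * s) := Real.exp_pos _
    rw [Real.exp_neg, ← div_eq_mul_inv, le_div_iff₀ h2]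
    exact h1
  -- key pointwise bound on Θ
  have hkey : ∀ t : ℝ, 0 ≤ t → ∀ ϑ ω : ℝ,
      |Θ t ϑ ω - (ϑ + ω * t)| ≤ μ / l * N * Real.exp (-(l * t)) := by
    intro t ht ϑ ω
    have heq := hΘ t ht ϑ ω
    have hdiff : Θ t ϑ ω - (ϑ + ω * t) = μ * ∫ s in Set.Ioi t,
        (Complex.exp (Complex.I * (Θ s ϑ ω : ℂ)) * (starRingEnd ℂ) (z s)).im := by
      rw [heq]; ring
    rw [hdiff, abs_mul, abs_of_pos hμ]
    set g : ℝ → ℝ := fun s => (Complex.exp (Complex.I * (Θ s ϑ ω : ℂ)) * (starRingEnd ℂ) (z s)).im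
    have hexpint : MeasureTheory.IntegrableOn (fun s => Real.exp (-(l * s))) (Set.Ioi t) := by
      simpa [neg_mul] using exp_neg_integrableOn_Ioi t hl
    have hbint : Integrable (fun s => N * Real.exp (-(l * s)))
        ((volume : Measure ℝ).restrict (Set.Ioi t)) := hexpint.const_mul N
    have hgb : ∀ s ∈ Set.Ioi t, |g s| ≤ N * Real.exp (-(l * s)) := by
      intro s hs
      have hs0 : (0:ℝ) ≤ s := le_trans ht (le_of_lt hs)
      have h1 : |g s| ≤ ‖Complex.exp (Complex.I * (Θ s ϑ ω : ℂ)) *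
          (starRingEnd ℂ) (z s)‖ := Complex.abs_im_le_norm _
      have h2 : ‖Complex.exp (Complex.I * (Θ s ϑ ω : ℂ)) *
          (starRingEnd ℂ) (z s)‖ = ‖z s‖ := by
        rw [norm_mul, Complex.norm_exp]
        simp
      rw [h2] at h1
      exact le_trans h1 (hzle s hs0)
    have habs : |∫ s in Set.Ioi t, g s| ≤ ∫ s in Set.Ioi t, |g s| := by
      simpa [Real.norm_eq_abs] using
        norm_integral_le_integral_norm (μ := volume.restrict (Set.Ioi t)) g
    have hmono : (∫ s in Set.Ioi t, |g s|) ≤ ∫ s in Set.Ioi t, N * Real.exp (-(l * s)) := by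
      apply integral_mono_of_nonneg
      · exact Filter.Eventually.of_forall fun s => abs_nonneg _
      · exact hbint
      · exact (ae_restrict_iff' measurableSet_Ioi).2 (Filter.Eventually.of_forall hgb)
    have hval : (∫ s in Set.Ioi t, N * Real.exp (-(l * s))) = N * (Real.exp (-(l * t)) / l) := by
      rw [integral_const_mul, integral_exp_neg_mul_Ioi' hl]
    calc μ * |∫ s in Set.Ioi t, g s| ≤ μ * (N * (Real.exp (-(l * t)) / l)) := by
          have := le_trans habs (le_trans hmono (le_of_eq hval))
          exact mul_le_mul_of_nonneg_left this (le_of_lt hμ)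
      _ = μ / l * N * Real.exp (-(l * t)) := by field_simp
  -- main supremum bound
  rw [expNormZ]
  apply ciSup_le
  rintro ⟨t, ht⟩
  simp only
  set G : ℝ × ℝ → ℂ := fun p =>
    Complex.exp (Complex.I * (Θ t p.1 p.2 : ℂ)) * (f p.1 p.2 : ℂ) with hG
  have hwt : orderParam f Θ t = ∫ p, G p ∂cylMeasure := rfl
  by_cases hGi : Integrable G cylMeasure
  · set g1 : ℝ × ℝ → ℂ := fun p =>
      Complex.exp (Complex.I * ((p.1 + p.2 * t : ℝ) : ℂ)) * (f p.1 p.2 : ℂ) with hg1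
    have hfm : AEStronglyMeasurable (fun p : ℝ × ℝ => (f p.1 p.2 : ℂ)) cylMeasure :=
      Complex.continuous_ofReal.comp_aestronglyMeasurable hf.integrable.aestronglyMeasurable
    have hg1m : AEStronglyMeasurable g1 cylMeasure := by
      apply AEStronglyMeasurable.mul _ hfm
      apply Continuous.aestronglyMeasurable
      exact Complex.continuous_exp.comp (by continuity)
    have hg1norm : ∀ p : ℝ × ℝ, ‖g1 p‖ = f p.1 p.2 := by
      intro p
      rw [hg1]
      simp only [norm_mul, Complex.norm_exp, Complex.norm_real, Real.norm_eq_abs]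
      rw [abs_of_nonneg (hf.nonneg _ _)]
      simp
    have hg1i : Integrable g1 cylMeasure := by
      apply Integrable.mono' hf.integrable hg1m
      exact Filter.Eventually.of_forall fun p => le_of_eq (hg1norm p)
    have hG2i : Integrable (fun p => G p - g1 p) cylMeasure := hGi.sub hg1i
    have hsplit : orderParam f Θ t =
        (∫ p, g1 p ∂cylMeasure) + ∫ p, (G p - g1 p) ∂cylMeasure := by
      rw [hwt, ← integral_add hg1i hG2i]
      exact integral_congr_ae (Filter.Eventually.of_forall fun p => by ring)
    have hA : (∫ p, g1 p ∂cylMeasure) = fHat f (-1) (-t) := by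
      rw [fHat]
      refine integral_congr_ae (Filter.Eventually.of_forall fun p => ?_)
      show Complex.exp (Complex.I * ((p.1 + p.2 * t : ℝ) : ℂ)) * (f p.1 p.2 : ℂ) =
        (f p.1 p.2 : ℂ) *
          Complex.exp (-Complex.I * (((((-1 : ℤ)) : ℝ) * p.1 + (-t) * p.2 : ℝ) : ℂ))
      rw [mul_comm]
      congr 1
      push_cast
      ring
    have hAbound : ‖∫ p, g1 p ∂cylMeasure‖ * Real.exp (l * t) ≤ M := by
      rw [hA]
      have h1 := hM (-1) (-t)
      have h2 : |((-1 : ℤ) : ℝ)| = 1 := by norm_num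
      have h3 : |(-t : ℝ)| = t := by rw [abs_neg, abs_of_nonneg ht]
      rw [h2, h3] at h1
      refine le_trans ?_ h1
      apply mul_le_mul_of_nonneg_left _ (norm_nonneg _)
      apply Real.exp_le_exp.2
      nlinarith
    have hBbound : ‖∫ p, (G p - g1 p) ∂cylMeasure‖ ≤
        μ / l * N * Real.exp (-(l * t)) := by
      have hCnn : 0 ≤ μ / l * N * Real.exp (-(l * t)) := by positivity
      calc ‖∫ p, (G p - g1 p) ∂cylMeasure‖
          ≤ ∫ p, ‖G p - g1 p‖ ∂cylMeasure := by
            simpa using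
              norm_integral_le_integral_norm (fun p => G p - g1 p) (μ := cylMeasure)
        _ ≤ ∫ p, (μ / l * N * Real.exp (-(l * t))) * f p.1 p.2 ∂cylMeasure := by
            apply integral_mono_of_nonneg
            · exact Filter.Eventually.of_forall fun p => norm_nonneg _
            · exact hf.integrable.const_mul _
            · refine Filter.Eventually.of_forall fun p => ?_
              show ‖G p - g1 p‖ ≤ μ / l * N * Real.exp (-(l * t)) * f p.1 p.2
              have hfac : G p - g1 p =
                  (Complex.exp (Complex.I * (Θ t p.1 p.2 : ℂ)) -
                    Complex.exp (Complex.I * ((p.1 + p.2 * t : ℝ) : ℂ))) * (f p.1 p.2 : ℂ) := by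
                rw [hG, hg1]; ring
              rw [hfac]
              simp only [norm_mul, Complex.norm_real, Real.norm_eq_abs]
              rw [abs_of_nonneg (hf.nonneg _ _)]
              apply mul_le_mul_of_nonneg_right _ (hf.nonneg _ _)
              exact le_trans (abs_cexp_I_sub' (Θ t p.1 p.2) (p.1 + p.2 * t))
                (hkey t ht p.1 p.2)
        _ = μ / l * N * Real.exp (-(l * t)) := by
            rw [integral_const_mul, hf.integral_one, mul_one]
    have hexp : Real.exp (-(l * t)) * Real.exp (l * t) = 1 := by
      rw [← Real.exp_add]; simp
    calc ‖orderParam f Θ t‖ * Real.exp (l * t)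
        ≤ (‖∫ p, g1 p ∂cylMeasure‖ +
            ‖∫ p, (G p - g1 p) ∂cylMeasure‖) * Real.exp (l * t) := by
          apply mul_le_mul_of_nonneg_right _ (Real.exp_nonneg _)
          rw [hsplit]
          exact norm_add_le _ _
      _ = ‖∫ p, g1 p ∂cylMeasure‖ * Real.exp (l * t) +
            ‖∫ p, (G p - g1 p) ∂cylMeasure‖ * Real.exp (l * t) := by ring
      _ ≤ M + μ / l * N * Real.exp (-(l * t)) * Real.exp (l * t) := by
          apply add_le_add hAbound
          exact mul_le_mul_of_nonneg_right hBbound (Real.exp_nonneg _)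
      _ = μ / l * N + M := by rw [mul_assoc, hexp]; ring
  · have : orderParam f Θ t = 0 := by rw [hwt, integral_undef hGi]
    rw [this]
    simp only [norm_zero, zero_mul]
    have : 0 ≤ μ / l * N := by positivity
    linarith
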